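/- Fix n ≥ 2 and let α, β ∈ (0,1). Let ρ ∈ [0,1)^n satisfy ρ_i ≤ α for all i ≠ 1 and ρ_1 > β. Then λ_1(ρ) > ρ_1 / (1 + 2n·(1 − ρ_1)/(1 − α)), and for every i ≠ 1, λ_i(ρ) ≤ 2(1 − ρ_1) / (β²·(1 − α)). -/

import Mathlib

open Finset

/-- Conditional-mean coefficients for the one-latent-node Gaussian tree model. -/
noncomputable def lam (n : ℕ) (ρ : Fin n → ℝ) (j : Fin n) : ℝ :=
  (ρ j / (1 - ρ j ^ 2)) / (1 + ∑ k, ρ k ^ 2 / (1 - ρ k ^ 2))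

set_option maxHeartbeats 1600000 in
/-- If `ρ_i ≤ α` for all `i ≠ 1` and `ρ_1 > β`, then
`λ_1(ρ) > ρ_1 / (1 + 2n(1 − ρ_1)/(1 − α))` and
`λ_i(ρ) ≤ 2(1 − ρ_1)/(β²(1 − α))` for all `i ≠ 1`. -/
theorem lam_bounds (n : ℕ) (hn : 2 ≤ n) (α β : ℝ)
    (hα : α ∈ Set.Ioo (0 : ℝ) 1) (hβ : β ∈ Set.Ioo (0 : ℝ) 1)
    (ρ : Fin n → ℝ) (hρ : ∀ i, ρ i ∈ Set.Ico (0 : ℝ) 1)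
    (hsmall : ∀ i : Fin n, i ≠ ⟨0, by omega⟩ → ρ i ≤ α)
    (hbig : β < ρ ⟨0, by omega⟩) :
    ρ ⟨0, by omega⟩ / (1 + 2 * n * (1 - ρ ⟨0, by omega⟩) / (1 - α))
        < lam n ρ ⟨0, by omega⟩ ∧
    ∀ i : Fin n, i ≠ ⟨0, by omega⟩ →
      lam n ρ i ≤ 2 * (1 - ρ ⟨0, by omega⟩) / (β ^ 2 * (1 - α)) := by
  obtain ⟨hα0, hα1⟩ := hα
  obtain ⟨hβ0, hβ1⟩ := hβ
  set i0 : Fin n := ⟨0, by omega⟩ with hi0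
  set r : ℝ := ρ i0 with hr
  have hr0 : 0 ≤ r := (hρ i0).1
  have hr1 : r < 1 := (hρ i0).2
  have hrpos : 0 < r := lt_trans hβ0 hbig
  have hden : ∀ k : Fin n, 0 < 1 - ρ k ^ 2 := by
    intro k
    nlinarith [(hρ k).1, (hρ k).2]
  have hterm_nonneg : ∀ k : Fin n, 0 ≤ ρ k ^ 2 / (1 - ρ k ^ 2) := fun k =>
    div_nonneg (sq_nonneg _) (le_of_lt (hden k))
  have hterm_le : ∀ k : Fin n, k ≠ i0 → ρ k ^ 2 / (1 - ρ k ^ 2) ≤ 1 / (1 - α) := by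
    intro k hk
    rw [div_le_div_iff₀ (hden k) (by linarith)]
    have h1 := hsmall k hk
    have h2 := (hρ k).1
    have hsq : ρ k ^ 2 ≤ α ^ 2 := by nlinarith
    nlinarith [mul_nonneg (sub_nonneg.2 hsq) (by linarith : (0:ℝ) ≤ 1 - α),
      mul_nonneg (by linarith : (0:ℝ) ≤ 1 - α) (by nlinarith : (0:ℝ) ≤ 1 + α - α ^ 2)]
  set T : ℝ := ∑ k, ρ k ^ 2 / (1 - ρ k ^ 2) with hT
  set S : ℝ := ∑ k ∈ univ.erase i0, ρ k ^ 2 / (1 - ρ k ^ 2) with hS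
  have hsplit : T = ρ i0 ^ 2 / (1 - ρ i0 ^ 2) + S := by
    rw [hT, hS]
    exact (Finset.add_sum_erase _ (fun k => ρ k ^ 2 / (1 - ρ k ^ 2)) (mem_univ i0)).symm
  have hS_nonneg : 0 ≤ S :=
    Finset.sum_nonneg fun k _ => hterm_nonneg k
  have hScard : ((univ.erase i0).card : ℝ) = (n : ℝ) - 1 := by
    rw [Finset.card_erase_of_mem (mem_univ i0), Finset.card_univ, Fintype.card_fin,
      Nat.cast_sub (by omega)]
    simp
  have hS_le : S ≤ ((n : ℝ) - 1) * (1 / (1 - α)) := by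
    rw [← hScard]
    exact Finset.sum_le_card_nsmul _ _ _ (fun k hk =>
      hterm_le k (Finset.ne_of_mem_erase hk)) |>.trans_eq (by simp [nsmul_eq_mul])
  have hT_nonneg : 0 ≤ T := hsplit ▸ add_nonneg (hterm_nonneg i0) hS_nonneg
  have hD_pos : 0 < 1 + T := by linarith
  have hr2 : 0 < 1 - r ^ 2 := hden i0
  -- key identity : (1 - r^2) * (1 + T) = 1 + (1 - r^2) * S
  have hkey : (1 - r ^ 2) * (1 + T) = 1 + (1 - r ^ 2) * S := by
    rw [hsplit, ← hr]
    field_simp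
    ring
  have hn2 : (2 : ℝ) ≤ (n : ℝ) := by exact_mod_cast hn
  clear_value i0 r T S
  constructor
  · -- first bound
    have hRHS : lam n ρ i0 = r / ((1 - r ^ 2) * (1 + T)) := by
      rw [lam, div_div, ← hr, ← hT]
    rw [hRHS]
    have hub : (1 - r ^ 2) * (1 + T) < 1 + 2 * n * (1 - r) / (1 - α) := by
      rw [hkey]
      have h1 : (1 - r ^ 2) * S ≤ 2 * (1 - r) * S := by
        nlinarith [mul_nonneg (sq_nonneg (1 - r)) hS_nonneg]
      have h2 : 2 * (1 - r) * S ≤ 2 * (1 - r) * (((n : ℝ) - 1) * (1 / (1 - α))) := by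
        apply mul_le_mul_of_nonneg_left hS_le (by linarith)
      have h3 : 2 * (1 - r) * (((n : ℝ) - 1) * (1 / (1 - α))) < 2 * n * (1 - r) / (1 - α) := by
        rw [div_eq_mul_one_div (2 * (n:ℝ) * (1 - r))]
        have : 0 < 1 / (1 - α) := one_div_pos.2 (by linarith)
        nlinarith
      linarith
    have hpos2 : 0 < (1 - r ^ 2) * (1 + T) := mul_pos hr2 hD_pos
    exact div_lt_div_of_pos_left hrpos hpos2 hub
  · intro i hi
    have hlo : 1 / (1 - r ^ 2) ≤ 1 + T := by
      rw [hsplit, ← hr]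
      have : (1 : ℝ) / (1 - r ^ 2) = 1 + r ^ 2 / (1 - r ^ 2) := by
        field_simp
        ring
      rw [this]
      linarith
    have hinum_nonneg : 0 ≤ ρ i / (1 - ρ i ^ 2) :=
      div_nonneg (hρ i).1 (le_of_lt (hden i))
    have hlam_le : lam n ρ i ≤ (ρ i / (1 - ρ i ^ 2)) * (1 - r ^ 2) := by
      rw [lam, ← hT]
      calc (ρ i / (1 - ρ i ^ 2)) / (1 + T)
          ≤ (ρ i / (1 - ρ i ^ 2)) / (1 / (1 - r ^ 2)) :=
            div_le_div_of_nonneg_left hinum_nonneg (by positivity) hlo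
        _ = (ρ i / (1 - ρ i ^ 2)) * (1 - r ^ 2) := by
            rw [div_eq_mul_inv, one_div, inv_inv]
    have hnum_le : ρ i / (1 - ρ i ^ 2) ≤ 1 / (1 - α) := by
      rw [div_le_div_iff₀ (hden i) (by linarith)]
      have h1 := hsmall i hi
      have h2 := (hρ i).1
      nlinarith [mul_le_mul_of_nonneg_left h1 h2]
    have step1 : (ρ i / (1 - ρ i ^ 2)) * (1 - r ^ 2) ≤ 2 * (1 - r) / (1 - α) := by
      have h1 : (ρ i / (1 - ρ i ^ 2)) * (1 - r ^ 2) ≤ (1 / (1 - α)) * (2 * (1 - r)) := by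
        have ha : 1 - r ^ 2 ≤ 2 * (1 - r) := by have h := sq_nonneg (1 - r); linarith
        have hb : 0 ≤ 2 * (1 - r) := by linarith
        calc (ρ i / (1 - ρ i ^ 2)) * (1 - r ^ 2)
            ≤ (ρ i / (1 - ρ i ^ 2)) * (2 * (1 - r)) :=
              mul_le_mul_of_nonneg_left ha hinum_nonneg
          _ ≤ (1 / (1 - α)) * (2 * (1 - r)) :=
              mul_le_mul_of_nonneg_right hnum_le hb
      calc (ρ i / (1 - ρ i ^ 2)) * (1 - r ^ 2)
          ≤ (1 / (1 - α)) * (2 * (1 - r)) := h1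
        _ = 2 * (1 - r) / (1 - α) := by ring
    have step2 : 2 * (1 - r) / (1 - α) ≤ 2 * (1 - r) / (β ^ 2 * (1 - α)) := by
      apply div_le_div_of_nonneg_left (by linarith) (mul_pos (pow_pos hβ0 2) (by linarith))
      have hb2 : β ^ 2 ≤ 1 := by
        have := mul_le_one₀ (a := β) (b := β) hβ1.le hβ0.le hβ1.le
        calc β ^ 2 = β * β := sq β
          _ ≤ 1 := this
      have h3 : 0 ≤ 1 - α := by linarith
      calc β ^ 2 * (1 - α) ≤ 1 * (1 - α) := mul_le_mul_of_nonneg_right hb2 h3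
        _ = 1 - α := one_mul _
    calc lam n ρ i ≤ (ρ i / (1 - ρ i ^ 2)) * (1 - r ^ 2) := hlam_le
      _ ≤ 2 * (1 - r) / (1 - α) := step1
      _ ≤ 2 * (1 - r) / (β ^ 2 * (1 - α)) := step2
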